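/- Let O be a commutative Hopf algebra over a commutative ring k, regarded as trivially graded. Let A be a commutative ℕ-graded algebra object in the symmetric category of ℕ-graded k-modules with super-symmetry (sign (−1)^{mn} on components of degrees m,n), equipped with a compatible graded left O-comodule algebra structure such that A(0) = O. Let B = A/O⁺A with projection π. Then the map A → O ⊗ B, a ↦ a₍₋₁₎ ⊗ π(a₍₀₎), induced by the comodule structure a ↦ a₍₋₁₎⊗a₍₀₎, is an isomorphism of graded left O-comodule algebras. In particular, the functor B ↦ O ⊗ B is an equivalence from connected commutative graded algebras (B(0) = k) to such neutrally graded O-comodule algebras. -/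

import Mathlib

open TensorProduct

set_option maxHeartbeats 1000000
set_option synthInstance.maxHeartbeats 100000

noncomputable section

section AuxHopf

open Coalgebra HopfAlgebra

/-- Product of two comultiplication representations. -/
def Coalgebra.Repr.mul' {k O : Type*} [CommRing k] [CommRing O] [Bialgebra k O]
    {ι κ : Type*} {o c : O} (r : Coalgebra.Repr k o ι) (u : Coalgebra.Repr k c κ) :
    Coalgebra.Repr k (o * c) (ι × κ) where
  index := r.index ×ˢ u.index
  left := fun im => r.left im.1 * u.left im.2
  right := fun im => r.right im.1 * u.right im.2
  eq := by
    have h : Coalgebra.comul (R := k) (o * c)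
        = Coalgebra.comul (R := k) o * Coalgebra.comul (R := k) c := Bialgebra.comul_mul o c
    rw [show CoalgebraStruct.comul (R := k) (o * c) = Coalgebra.comul (R := k) (o * c) from rfl,
      h, ← r.eq, ← u.eq, Finset.sum_mul_sum, Finset.sum_product]
    simp [Algebra.TensorProduct.tmul_mul_tmul]

lemma Coalgebra.Repr.smul_left_sum {k O : Type*} [CommRing k] [AddCommMonoid O]
    [Module k O] [Coalgebra k O] {o : O} {ι : Type*} (r : Coalgebra.Repr k o ι) :
    ∑ i ∈ r.index, counit (R := k) (r.right i) • r.left i = o := by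
  have h2 := congrArg (⇑(_root_.TensorProduct.rid k O)) (Coalgebra.sum_tmul_counit_eq (R := k) r)
  simpa [-Coalgebra.sum_tmul_counit_eq, -Coalgebra.sum_counit_tmul_eq] using h2

lemma Coalgebra.Repr.smul_right_sum {k O : Type*} [CommRing k] [AddCommMonoid O]
    [Module k O] [Coalgebra k O] {o : O} {ι : Type*} (r : Coalgebra.Repr k o ι) :
    ∑ i ∈ r.index, counit (R := k) (r.left i) • r.right i = o := by
  have h2 := congrArg (⇑(_root_.TensorProduct.lid k O)) (Coalgebra.sum_counit_tmul_eq (R := k) r)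
  simpa [-Coalgebra.sum_tmul_counit_eq, -Coalgebra.sum_counit_tmul_eq] using h2

/-- The key Hopf identity `∑ S(o₁ p) o₂ = ε(o) • S p` in a commutative Hopf algebra. -/
lemma antipode_mul_left_aux {k O : Type*} [CommRing k] [CommRing O] [HopfAlgebra k O]
    (o p : O) {ι : Type*} (r : Coalgebra.Repr k o ι) :
    ∑ i ∈ r.index, antipode (R := k) (r.left i * p) * r.right i
      = Coalgebra.counit (R := k) o • antipode (R := k) p := by
  classical
  set S : O →ₗ[k] O := HopfAlgebra.antipode (R := k) with hS
  let s := ℛ k p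
  let u : ∀ j, Coalgebra.Repr k (s.left j) (O × O) := fun j => ℛ k (s.left j)
  let t : ∀ j, Coalgebra.Repr k (s.right j) (O × O) := fun j => ℛ k (s.right j)
  let Xi : O ⊗[k] (O ⊗[k] O) →ₗ[k] O :=
    ∑ i ∈ r.index,
      (LinearMap.mul' k O ∘ₗ TensorProduct.map (S ∘ₗ LinearMap.mulLeft k (r.left i))
        (LinearMap.mul' k O ∘ₗ TensorProduct.map (LinearMap.mulLeft k (r.right i)) S))
  have hXi : ∀ (x y z : O), Xi (x ⊗ₜ[k] (y ⊗ₜ[k] z))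
      = ∑ i ∈ r.index, S (r.left i * x) * ((r.right i * y) * S z) := by
    intro x y z
    simp [Xi, LinearMap.sum_apply]
  have hT := congrArg (⇑Xi) (Coalgebra.sum_tmul_tmul_eq (R := k) s u t)
  rw [map_sum, map_sum] at hT
  simp only [map_sum, hXi] at hT
  have hL : ∑ j ∈ s.index, ∑ m ∈ (u j).index, ∑ i ∈ r.index,
      S (r.left i * (u j).left m) * ((r.right i * (u j).right m) * S (s.right j))
      = Coalgebra.counit (R := k) o • S p := by
    have step : ∀ j ∈ s.index, ∑ m ∈ (u j).index, ∑ i ∈ r.index,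
        S (r.left i * (u j).left m) * ((r.right i * (u j).right m) * S (s.right j))
        = (Coalgebra.counit (R := k) (o * s.left j)) • (1 : O) * S (s.right j) := by
      intro j _
      have hq := HopfAlgebra.sum_antipode_mul_eq_smul (R := k) (r.mul' (u j))
      rw [Finset.sum_comm]
      calc ∑ i ∈ r.index, ∑ m ∈ (u j).index,
            S (r.left i * (u j).left m) * ((r.right i * (u j).right m) * S (s.right j))
          = (∑ i ∈ r.index, ∑ m ∈ (u j).index,
            S (r.left i * (u j).left m) * (r.right i * (u j).right m)) * S (s.right j) := by
            rw [Finset.sum_mul]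
            exact Finset.sum_congr rfl fun i _ => by
              rw [Finset.sum_mul]
              exact Finset.sum_congr rfl fun m _ => by ring
        _ = (Coalgebra.counit (R := k) (o * s.left j)) • (1 : O) * S (s.right j) := by
            rw [← Finset.sum_product', ← hq]; rfl
    rw [Finset.sum_congr rfl step]
    have h2 : ∀ j ∈ s.index, (Coalgebra.counit (R := k) (o * s.left j)) • (1 : O) * S (s.right j)
        = Coalgebra.counit (R := k) o •
            (Coalgebra.counit (R := k) (s.left j) • S (s.right j)) := by
      intro j _
      rw [Bialgebra.counit_mul, smul_mul_assoc, one_mul, mul_smul]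
    rw [Finset.sum_congr rfl h2, ← Finset.smul_sum]
    congr 1
    conv_rhs => rw [← s.smul_right_sum (k := k)]
    rw [map_sum]
    exact Finset.sum_congr rfl fun j _ => (map_smul S _ _).symm
  have hright : ∀ i ∈ r.index, S (r.left i * p) * r.right i
      = ∑ j ∈ s.index, Coalgebra.counit (R := k) (s.right j)
          • (S (r.left i * s.left j) * r.right i) := by
    intro i _
    conv_lhs => rw [← s.smul_left_sum (k := k)]
    rw [Finset.mul_sum]
    simp only [mul_smul_comm, map_sum, map_smul, Finset.sum_mul, smul_mul_assoc]
  calc ∑ i ∈ r.index, S (r.left i * p) * r.right i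
      = ∑ i ∈ r.index, ∑ j ∈ s.index, Coalgebra.counit (R := k) (s.right j)
          • (S (r.left i * s.left j) * r.right i) := Finset.sum_congr rfl hright
    _ = ∑ j ∈ s.index, ∑ i ∈ r.index, Coalgebra.counit (R := k) (s.right j)
          • (S (r.left i * s.left j) * r.right i) := Finset.sum_comm
    _ = ∑ j ∈ s.index, ∑ m ∈ (t j).index, ∑ i ∈ r.index,
          S (r.left i * s.left j) * (r.right i * (t j).left m * S ((t j).right m)) := by
        refine Finset.sum_congr rfl fun j _ => ?_
        have hq := HopfAlgebra.sum_mul_antipode_eq_smul (R := k) (t j)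
        rw [← Finset.sum_comm]
        refine Finset.sum_congr rfl fun i _ => ?_
        calc Coalgebra.counit (R := k) (s.right j) • (S (r.left i * s.left j) * r.right i)
            = S (r.left i * s.left j) * (r.right i
                * (Coalgebra.counit (R := k) (s.right j) • (1 : O))) := by
              rw [mul_smul_comm, mul_one, mul_smul_comm]
          _ = S (r.left i * s.left j) * (r.right i
                * ∑ m ∈ (t j).index, (t j).left m * S ((t j).right m)) := by rw [hq]
          _ = ∑ m ∈ (t j).index,
                S (r.left i * s.left j) * (r.right i * (t j).left m * S ((t j).right m)) := by
              rw [Finset.mul_sum, Finset.mul_sum]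
              exact Finset.sum_congr rfl fun m _ => by ring
    _ = Coalgebra.counit (R := k) o • S p := hT.symm.trans hL

end AuxHopf

theorem neutrally_graded_comodule_algebra_decomposition
    (k : Type*) [CommRing k]
    (O : Type*) [CommRing O] [HopfAlgebra k O]
    (A : Type*) [Ring A] [Algebra k A]
    (𝒜 : ℕ → Submodule k A) [DirectSum.Decomposition 𝒜]
    (hone : (1 : A) ∈ 𝒜 0)
    (hmul : ∀ (m n : ℕ) (a b : A), a ∈ 𝒜 m → b ∈ 𝒜 n → a * b ∈ 𝒜 (m + n))
    -- graded (super) commutativity of `A`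
    (hcomm : ∀ (m n : ℕ) (a b : A), a ∈ 𝒜 m → b ∈ 𝒜 n →
      a * b = ((-1 : k) ^ (m * n)) • (b * a))
    -- `A(0) = O`
    (φ : O →ₐ[k] A) (hφinj : Function.Injective φ)
    (hφ0 : ∀ o : O, φ o ∈ 𝒜 0)
    (h0φ : ∀ a ∈ 𝒜 0, ∃ o : O, φ o = a)
    -- the left `O`-comodule algebra structure on `A`
    (ρ : A →ₗ[k] O ⊗[k] A)
    (hρ1 : ρ 1 = 1 ⊗ₜ[k] 1)
    (hρmul : ∀ a b : A, ρ (a * b) = ρ a * ρ b)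
    (hρcounit : ∀ a : A,
      TensorProduct.lid k A
        (TensorProduct.map (Coalgebra.counit (R := k) (A := O))
          LinearMap.id (ρ a)) = a)
    (hρcoassoc : ∀ a : A,
      TensorProduct.map (Coalgebra.comul (R := k) (A := O))
        LinearMap.id (ρ a) =
      (TensorProduct.assoc k O O A).symm
        (TensorProduct.map LinearMap.id ρ (ρ a)))
    -- the comodule structure is graded
    (hρgr : ∀ (n : ℕ) (a : A), a ∈ 𝒜 n →
      ρ a ∈ LinearMap.range
        (TensorProduct.map (LinearMap.id (R := k) (M := O)) (𝒜 n).subtype))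
    -- on `A(0) = O` the coaction is the regular one
    (hρφ : ∀ o : O, ρ (φ o) =
      TensorProduct.map LinearMap.id φ.toLinearMap
        (Coalgebra.comul (R := k) o))
    -- `B = A / O⁺A`
    (B : Type*) [Ring B] [Algebra k B]
    (π : A →ₐ[k] B) (hπsurj : Function.Surjective π)
    (hπker : ∀ x : A, π x = 0 ↔ x ∈ Submodule.span k
      {y : A | ∃ (o : O) (a : A),
        Coalgebra.counit (R := k) o = (0 : k) ∧ y = φ o * a}) :
    Function.Bijective
      ((TensorProduct.map LinearMap.id π.toLinearMap) ∘ₗ ρ) ∧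
    (∀ a b : A,
      ((TensorProduct.map LinearMap.id π.toLinearMap) ∘ₗ ρ) (a * b) =
      ((TensorProduct.map LinearMap.id π.toLinearMap) ∘ₗ ρ) a *
      ((TensorProduct.map LinearMap.id π.toLinearMap) ∘ₗ ρ) b) ∧
    ((TensorProduct.map LinearMap.id π.toLinearMap) ∘ₗ ρ) 1 = 1 := by
  classical
  set S : O →ₗ[k] O := HopfAlgebra.antipode (R := k) with hSdef
  set φl : O →ₗ[k] A := φ.toLinearMap with hφldef
  set πl : A →ₗ[k] B := π.toLinearMap with hπldef
  set M : O ⊗[k] A →ₗ[k] A :=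
    LinearMap.mul' k A ∘ₗ TensorProduct.map (φl ∘ₗ S) LinearMap.id with hMdef
  set P : A →ₗ[k] A := M ∘ₗ ρ with hPdef
  -- `id ⊗ π` is multiplicative
  have hmapmul : ∀ u v : O ⊗[k] A,
      TensorProduct.map LinearMap.id πl (u * v)
        = TensorProduct.map LinearMap.id πl u * TensorProduct.map LinearMap.id πl v := by
    have he : TensorProduct.map (LinearMap.id) πl
        = (Algebra.TensorProduct.map (AlgHom.id k O) π).toLinearMap := by
      apply TensorProduct.ext'
      intro o a
      simp [hπldef]
    intro u v
    rw [he]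
    simp only [AlgHom.toLinearMap_apply, map_mul]
  -- `π ∘ φ = unit ∘ ε`
  have hπφ : ∀ o : O, π (φ o) = algebraMap k B (Coalgebra.counit (R := k) o) := by
    intro o
    have h0 : Coalgebra.counit (R := k)
        (o - algebraMap k O (Coalgebra.counit (R := k) o)) = (0 : k) := by
      simp
    have hy : π (φ (o - algebraMap k O (Coalgebra.counit (R := k) o))) = 0 := by
      rw [hπker]
      exact Submodule.subset_span ⟨_, 1, h0, (mul_one _).symm⟩
    rw [map_sub, map_sub, AlgHom.commutes, AlgHom.commutes, sub_eq_zero] at hy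
    exact hy
  -- the coaction sends `φ o` to `o ⊗ 1` after projecting with `π`
  have hK1 : ∀ o : O, TensorProduct.map LinearMap.id πl (ρ (φ o)) = o ⊗ₜ[k] (1 : B) := by
    intro o
    rw [hρφ o]
    set r := Coalgebra.Repr.arbitrary k o with hr
    rw [show Coalgebra.comul (R := k) o = ∑ i ∈ r.index, r.left i ⊗ₜ[k] r.right i from r.eq.symm]
    rw [map_sum, map_sum]
    simp only [TensorProduct.map_tmul, LinearMap.id_coe, id_eq, AlgHom.toLinearMap_apply,
      hπldef]
    calc ∑ i ∈ r.index, r.left i ⊗ₜ[k] π (φ (r.right i))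
        = ∑ i ∈ r.index, (Coalgebra.counit (R := k) (r.right i) • r.left i) ⊗ₜ[k] (1 : B) := by
          refine Finset.sum_congr rfl fun i _ => ?_
          rw [hπφ, Algebra.algebraMap_eq_smul_one, tmul_smul, smul_tmul']
      _ = (∑ i ∈ r.index, Coalgebra.counit (R := k) (r.right i) • r.left i) ⊗ₜ[k] (1 : B) :=
          (TensorProduct.sum_tmul _ _ _).symm
      _ = o ⊗ₜ[k] (1 : B) := by rw [r.smul_left_sum]
  -- expansion of the counit law along a finite representation of `ρ x`
  have hcounit_sum : ∀ (x : A) (Fx : Finset (O × A)), ρ x = ∑ q ∈ Fx, q.1 ⊗ₜ[k] q.2 →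
      ∑ q ∈ Fx, Coalgebra.counit (R := k) q.1 • q.2 = x := by
    intro x Fx hFx
    have h := hρcounit x
    rw [hFx, map_sum, map_sum] at h
    simpa using h
  -- expansion of the coassociativity law along a finite representation of `ρ x`
  have hcoassoc_sum : ∀ (x : A) (Fx : Finset (O × A)), ρ x = ∑ q ∈ Fx, q.1 ⊗ₜ[k] q.2 →
      ∑ q ∈ Fx, (TensorProduct.assoc k O O A)
          ((Coalgebra.comul (R := k) q.1) ⊗ₜ[k] q.2)
        = ∑ q ∈ Fx, q.1 ⊗ₜ[k] ρ q.2 := by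
    intro x Fx hFx
    have h := hρcoassoc x
    rw [hFx, map_sum, map_sum] at h
    simp only [TensorProduct.map_tmul, LinearMap.id_coe, id_eq] at h
    calc ∑ q ∈ Fx, (TensorProduct.assoc k O O A) ((Coalgebra.comul (R := k) q.1) ⊗ₜ[k] q.2)
        = (TensorProduct.assoc k O O A).toLinearMap
            (∑ q ∈ Fx, (Coalgebra.comul (R := k) q.1) ⊗ₜ[k] q.2) := by
          rw [map_sum]; rfl
      _ = ∑ q ∈ Fx, q.1 ⊗ₜ[k] ρ q.2 := by
          rw [h]
          exact (TensorProduct.assoc k O O A).apply_symm_apply _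
  -- `(id ⊗ π) ∘ ρ ∘ P = 1 ⊗ π ·`
  have hK2 : ∀ x : A,
      TensorProduct.map LinearMap.id πl (ρ (P x)) = (1 : O) ⊗ₜ[k] π x := by
    intro x
    obtain ⟨Fx, hFx⟩ := TensorProduct.exists_finset (R := k) (ρ x)
    have hPx : P x = ∑ q ∈ Fx, φ (S q.1) * q.2 := by
      rw [hPdef, LinearMap.comp_apply, hFx, map_sum]
      refine Finset.sum_congr rfl fun q _ => ?_
      simp [hMdef, hφldef]
    set Θ : (O ⊗[k] O) ⊗[k] A →ₗ[k] O ⊗[k] B :=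
      TensorProduct.map (LinearMap.mul' k O ∘ₗ TensorProduct.map S LinearMap.id) πl with hΘ
    set Λ : O ⊗[k] (O ⊗[k] A) →ₗ[k] O ⊗[k] B :=
      LinearMap.mul' k (O ⊗[k] B) ∘ₗ TensorProduct.map
        (((TensorProduct.mk k O B).flip 1) ∘ₗ S)
        (TensorProduct.map LinearMap.id πl) with hΛ
    have hΛassoc : Λ ∘ₗ (TensorProduct.assoc k O O A).toLinearMap = Θ := by
      apply TensorProduct.ext_threefold
      intro o p a
      simp [hΛ, hΘ, Algebra.TensorProduct.tmul_mul_tmul, hπldef]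
    have hΛapp : ∀ (o : O) (t : O ⊗[k] A),
        Λ (o ⊗ₜ[k] t) = (S o ⊗ₜ[k] (1 : B)) * (TensorProduct.map LinearMap.id πl t) := by
      intro o t
      simp [hΛ]
    calc TensorProduct.map LinearMap.id πl (ρ (P x))
        = ∑ q ∈ Fx, TensorProduct.map LinearMap.id πl (ρ (φ (S q.1)) * ρ q.2) := by
          rw [hPx, map_sum, map_sum]
          exact Finset.sum_congr rfl fun q _ => by rw [hρmul]
      _ = ∑ q ∈ Fx, (S q.1 ⊗ₜ[k] (1 : B)) * TensorProduct.map LinearMap.id πl (ρ q.2) := by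
          refine Finset.sum_congr rfl fun q _ => ?_
          rw [hmapmul, hK1]
      _ = ∑ q ∈ Fx, Λ (q.1 ⊗ₜ[k] ρ q.2) := by
          exact Finset.sum_congr rfl fun q _ => (hΛapp _ _).symm
      _ = ∑ q ∈ Fx, Λ ((TensorProduct.assoc k O O A)
            ((Coalgebra.comul (R := k) q.1) ⊗ₜ[k] q.2)) := by
          rw [← map_sum, ← map_sum, hcoassoc_sum x Fx hFx]
      _ = ∑ q ∈ Fx, Θ ((Coalgebra.comul (R := k) q.1) ⊗ₜ[k] q.2) := by
          refine Finset.sum_congr rfl fun q _ => ?_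
          rw [← hΛassoc]
          rfl
      _ = ∑ q ∈ Fx, (algebraMap k O (Coalgebra.counit (R := k) q.1)) ⊗ₜ[k] π q.2 := by
          refine Finset.sum_congr rfl fun q _ => ?_
          rw [hΘ, TensorProduct.map_tmul, LinearMap.comp_apply]
          rw [show TensorProduct.map S LinearMap.id = LinearMap.rTensor O S from rfl]
          rw [HopfAlgebra.mul_antipode_rTensor_comul_apply]
          rfl
      _ = (1 : O) ⊗ₜ[k] π x := by
          rw [← hcounit_sum x Fx hFx, map_sum]
          rw [TensorProduct.tmul_sum]
          refine Finset.sum_congr rfl fun q _ => ?_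
          rw [map_smul, Algebra.algebraMap_eq_smul_one, TensorProduct.smul_tmul]
  -- the decomposition `x = ∑ φ(x₍₋₁₎) * P (x₍₀₎)`
  have hI1 : ∀ x : A, LinearMap.mul' k A (TensorProduct.map φl P (ρ x)) = x := by
    intro x
    obtain ⟨Fx, hFx⟩ := TensorProduct.exists_finset (R := k) (ρ x)
    set F : O ⊗[k] O →ₗ[k] A :=
      φl ∘ₗ LinearMap.mul' k O ∘ₗ TensorProduct.map LinearMap.id S with hF
    set Θ' : (O ⊗[k] O) ⊗[k] A →ₗ[k] A :=
      LinearMap.mul' k A ∘ₗ TensorProduct.map F LinearMap.id with hΘ'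
    set Λ' : O ⊗[k] (O ⊗[k] A) →ₗ[k] A :=
      LinearMap.mul' k A ∘ₗ TensorProduct.map φl M with hΛ'
    have hΛ'assoc : Λ' ∘ₗ (TensorProduct.assoc k O O A).toLinearMap = Θ' := by
      apply TensorProduct.ext_threefold
      intro o p a
      simp [hΛ', hΘ', hF, hMdef, hφldef, map_mul, mul_assoc]
    calc LinearMap.mul' k A (TensorProduct.map φl P (ρ x))
        = ∑ q ∈ Fx, Λ' (q.1 ⊗ₜ[k] ρ q.2) := by
          rw [hFx, map_sum, map_sum]
          refine Finset.sum_congr rfl fun q _ => ?_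
          simp [hΛ', hPdef]
      _ = ∑ q ∈ Fx, Λ' ((TensorProduct.assoc k O O A)
            ((Coalgebra.comul (R := k) q.1) ⊗ₜ[k] q.2)) := by
          rw [← map_sum, ← map_sum, hcoassoc_sum x Fx hFx]
      _ = ∑ q ∈ Fx, Θ' ((Coalgebra.comul (R := k) q.1) ⊗ₜ[k] q.2) := by
          refine Finset.sum_congr rfl fun q _ => ?_
          rw [← hΛ'assoc]
          rfl
      _ = ∑ q ∈ Fx, Coalgebra.counit (R := k) q.1 • q.2 := by
          refine Finset.sum_congr rfl fun q _ => ?_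
          rw [hΘ', LinearMap.comp_apply, TensorProduct.map_tmul, hF]
          rw [LinearMap.comp_apply, LinearMap.comp_apply]
          rw [show TensorProduct.map LinearMap.id S = LinearMap.lTensor O S from rfl]
          rw [HopfAlgebra.mul_antipode_lTensor_comul_apply]
          simp only [LinearMap.mul'_apply, LinearMap.id_coe, id_eq, hφldef,
            AlgHom.toLinearMap_apply, AlgHom.commutes]
          rw [← Algebra.smul_def]
      _ = x := hcounit_sum x Fx hFx
  -- `P` vanishes on the kernel of `π`
  have hPker : ∀ y : A, π y = 0 → P y = 0 := by
    intro y hy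
    have hy' := (hπker y).mp hy
    refine Submodule.span_induction ?_ (map_zero P)
      (fun a b _ _ ha hb => by rw [map_add, ha, hb, add_zero])
      (fun c z _ hz => by rw [map_smul, hz, smul_zero]) hy'
    rintro z ⟨o, a, ho, rfl⟩
    obtain ⟨Fa, hFa⟩ := TensorProduct.exists_finset (R := k) (ρ a)
    set r := Coalgebra.Repr.arbitrary k o with hrdef
    have hρφo : ρ (φ o) = ∑ i ∈ r.index, r.left i ⊗ₜ[k] φ (r.right i) := by
      rw [hρφ o,
        show Coalgebra.comul (R := k) o = ∑ i ∈ r.index, r.left i ⊗ₜ[k] r.right i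
          from r.eq.symm, map_sum]
      simp [hφldef]
    calc P (φ o * a) = M (ρ (φ o) * ρ a) := by
          rw [hPdef, LinearMap.comp_apply, hρmul]
      _ = ∑ i ∈ r.index, ∑ q ∈ Fa,
            φ (S (r.left i * q.1)) * (φ (r.right i) * q.2) := by
          rw [hρφo, hFa, Finset.sum_mul_sum, map_sum]
          refine Finset.sum_congr rfl fun i _ => ?_
          rw [map_sum]
          refine Finset.sum_congr rfl fun q _ => ?_
          rw [Algebra.TensorProduct.tmul_mul_tmul]
          simp [hMdef, hφldef]
      _ = ∑ q ∈ Fa, (∑ i ∈ r.index,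
            φ (S (r.left i * q.1) * r.right i)) * q.2 := by
          rw [Finset.sum_comm]
          refine Finset.sum_congr rfl fun q _ => ?_
          rw [Finset.sum_mul]
          refine Finset.sum_congr rfl fun i _ => ?_
          rw [map_mul φ (S (r.left i * q.1)) (r.right i), mul_assoc]
      _ = ∑ q ∈ Fa, (φ (Coalgebra.counit (R := k) o • S q.1)) * q.2 := by
          refine Finset.sum_congr rfl fun q _ => ?_
          rw [← map_sum, antipode_mul_left_aux (k := k) o q.1 r]
      _ = 0 := by
          rw [ho]
          simp
  -- assembling everything
  refine ⟨⟨?_, ?_⟩, ?_, ?_⟩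
  · -- injectivity
    intro a b hab
    simp only [LinearMap.comp_apply] at hab
    have h0 : TensorProduct.map LinearMap.id πl (ρ (a - b)) = 0 := by
      rw [map_sub, map_sub, hab, sub_self]
    have hex := lTensor_exact (Q := O) (LinearMap.exact_subtype_ker_map πl)
      (show Function.Surjective ⇑πl from hπsurj)
    obtain ⟨t, ht⟩ := (hex (ρ (a - b))).mp h0
    have hD0 : ∀ t : O ⊗[k] (LinearMap.ker πl),
        LinearMap.mul' k A (TensorProduct.map φl P
          (LinearMap.lTensor O (LinearMap.ker πl).subtype t)) = 0 := by
      intro t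
      induction t using TensorProduct.induction_on with
      | zero => simp
      | tmul o y =>
        have hy : P (y : A) = 0 := hPker y (LinearMap.mem_ker.mp y.2)
        simp [LinearMap.lTensor_tmul, hy]
      | add u v hu hv => rw [map_add, map_add, map_add, hu, hv, add_zero]
    have hDt : LinearMap.mul' k A (TensorProduct.map φl P (ρ (a - b))) = 0 := by
      rw [← ht]
      exact hD0 t
    have hsub : a - b = 0 := by rw [← hI1 (a - b), hDt]
    exact sub_eq_zero.mp hsub
  · -- surjectivity
    intro tb
    induction tb using TensorProduct.induction_on with
    | zero => exact ⟨0, by simp⟩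
    | tmul o b =>
      obtain ⟨x, rfl⟩ := hπsurj b
      refine ⟨φ o * P x, ?_⟩
      rw [LinearMap.comp_apply, hρmul, hmapmul, hK1, hK2,
        Algebra.TensorProduct.tmul_mul_tmul, mul_one, one_mul]
    | add u v hu hv =>
      obtain ⟨x, hx⟩ := hu
      obtain ⟨y, hy⟩ := hv
      exact ⟨x + y, by rw [map_add, hx, hy]⟩
  · -- multiplicativity
    intro a b
    simp only [LinearMap.comp_apply]
    rw [hρmul, hmapmul]
  · -- unitality
    simp only [LinearMap.comp_apply]
    rw [hρ1, Algebra.TensorProduct.one_def]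
    simp [hπldef]
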